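/- Let MB_n (n ≥ 4) be the modified bubble-sort graph and let S ⊆ V(MB_n) with |S| = 4 such that the induced subgraph MB_n[S] is a 4-cycle. Then |N(S)| = 4(n-2) = 4n - 8, where N(S) is the set of vertices outside S adjacent to some vertex of S. -/

import Mathlib

/-- The modified bubble-sort graph: the Cayley graph of `Sym(n)` generated by the
transpositions `(12),(23),…,((n-1)n),(n1)` (positions taken mod `n`). -/
def MB (n : ℕ) : SimpleGraph (Equiv.Perm (Fin n)) :=
  SimpleGraph.fromRel fun g h =>
    ∃ i : Fin n, h = g * Equiv.swap i ⟨(i.val + 1) % n, Nat.mod_lt _ i.pos⟩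
/-- `N(S)`: vertices outside `S` adjacent to some vertex of `S`. -/
def setNbhd {V : Type*} (G : SimpleGraph V) (S : Set V) : Set V :=
  {w | w ∉ S ∧ ∃ v ∈ S, G.Adj v w}

set_option linter.unreachableTactic false
set_option linter.unusedTactic false

open Equiv

section Helpers
variable {n : ℕ} [NeZero n]

lemma fin_v1 (h : 2 ≤ n) : ((1 : Fin n)).val = 1 := by
  rw [Fin.val_one']; exact Nat.mod_eq_of_lt (by omega)

lemma fin_ne1 (h : 2 ≤ n) : (1 : Fin n) ≠ 0 := by
  intro he; have := congrArg Fin.val he; rw [fin_v1 h] at this; simp at this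

lemma fin_ne2 (h : 3 ≤ n) : (1 + 1 : Fin n) ≠ 0 := by
  intro he; have := congrArg Fin.val he
  simp only [Fin.add_def, fin_v1 (show 2 ≤ n by omega), Fin.val_zero] at this
  rw [Nat.mod_eq_of_lt (show 1 + 1 < n by omega)] at this
  omega

lemma fin_ne3 (h : 4 ≤ n) : (1 + 1 + 1 : Fin n) ≠ 0 := by
  intro he; have := congrArg Fin.val he
  simp only [Fin.add_def, fin_v1 (show 2 ≤ n by omega), Fin.val_zero] at this
  rw [Nat.mod_eq_of_lt (show 1 + 1 < n by omega),
    Nat.mod_eq_of_lt (show 1 + 1 + 1 < n by omega)] at this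
  omega

lemma fin_a1 (h : 2 ≤ n) (a : Fin n) : a + 1 ≠ a := by
  intro he; refine fin_ne1 h (add_left_cancel (a := a) ?_)
  rw [add_zero]; exact he

lemma fin_a2 (h : 3 ≤ n) (a : Fin n) : a + 1 + 1 ≠ a := by
  intro he; refine fin_ne2 h (add_left_cancel (a := a) ?_)
  rw [add_zero, ← add_assoc]; exact he

lemma fin_a3 (h : 4 ≤ n) (a : Fin n) : a + 1 + 1 + 1 ≠ a := by
  intro he; refine fin_ne3 h (add_left_cancel (a := a) ?_)
  rw [add_zero, ← add_assoc, ← add_assoc]; exact he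

/-- the generator transpositions -/
def sw (i : Fin n) : Equiv.Perm (Fin n) := Equiv.swap i (i + 1)

lemma sw_inv (i : Fin n) : (sw i)⁻¹ = sw i := Equiv.swap_inv i (i+1)

lemma sw_mul_self (i : Fin n) : sw i * sw i = 1 := Equiv.swap_mul_self i (i+1)

lemma sw_ne_one (h : 2 ≤ n) (i : Fin n) : sw i ≠ 1 := by
  intro he
  have hv := DFunLike.congr_fun he i
  rw [show (sw i) i = i + 1 from Equiv.swap_apply_left i (i+1)] at hv
  simp only [Equiv.Perm.one_apply] at hv
  exact fin_a1 h i hv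

lemma sw_apply_of_ne (i : Fin n) {x : Fin n} (h1 : x ≠ i) (h2 : x ≠ i + 1) :
    sw i x = x := Equiv.swap_apply_of_ne_of_ne h1 h2

lemma sw_apply_left (i : Fin n) : sw i i = i + 1 := Equiv.swap_apply_left i (i+1)

lemma sw_apply_right (i : Fin n) : sw i (i+1) = i := Equiv.swap_apply_right i (i+1)

lemma sw_inj (h : 3 ≤ n) {i j : Fin n} (he : sw i = sw j) : i = j := by
  have hv := DFunLike.congr_fun he i
  rw [sw_apply_left] at hv
  -- hv : i + 1 = sw j i
  by_cases h1 : i = j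
  · exact h1
  by_cases h2 : i = j + 1
  · rw [h2, sw_apply_right] at hv
    exact absurd hv (fin_a2 h j)
  · rw [sw_apply_of_ne j h1 h2] at hv
    exact absurd hv (fin_a1 (by omega) i)

lemma moved {k l x : Fin n} (hx : (sw k * sw l) x ≠ x) :
    x = k ∨ x = k + 1 ∨ x = l ∨ x = l + 1 := by
  by_contra hc; push_neg at hc; obtain ⟨h1, h2, h3, h4⟩ := hc
  exact hx (by rw [Equiv.Perm.mul_apply, sw_apply_of_ne l h3 h4, sw_apply_of_ne k h1 h2])

lemma movedl (h : 3 ≤ n) {k l : Fin n} (hkl : k ≠ l) : (sw k * sw l) l ≠ l := by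
  rw [Equiv.Perm.mul_apply, sw_apply_left]
  unfold sw
  rw [Equiv.swap_apply_def]
  split_ifs with h1 h2
  · -- l + 1 = k, value k+1; k+1 = l → l+1+1 = l
    intro he; rw [← h1] at he; exact fin_a2 h l he
  · -- l + 1 = k + 1, so k = l
    have hc := add_right_cancel h2
    first | exact absurd hc hkl | exact absurd hc.symm hkl
  · exact fin_a1 (by omega) l

lemma movedl1 (h : 3 ≤ n) {k l : Fin n} (hkl : k ≠ l) : (sw k * sw l) (l+1) ≠ l + 1 := by
  rw [Equiv.Perm.mul_apply, sw_apply_right]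
  unfold sw
  rw [Equiv.swap_apply_def]
  split_ifs with h1 h2
  · intro _he; exact absurd h1.symm hkl
  · -- h2 : l = k + 1, goal k ≠ l + 1
    intro he; rw [he] at h2; exact fin_a2 h l h2.symm
  · intro he; exact fin_a1 (by omega) l he.symm

lemma movedk (h : 3 ≤ n) {k l : Fin n} (hkl : k ≠ l) : (sw k * sw l) k ≠ k := by
  intro he
  have h2 : (sw k * sw l)⁻¹ ((sw k * sw l) k) = (sw k * sw l)⁻¹ k := by rw [he]
  rw [show ∀ (f : Equiv.Perm (Fin n)) (x : Fin n), f⁻¹ (f x) = x from fun f x => f.symm_apply_apply x, mul_inv_rev, sw_inv, sw_inv] at h2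
  exact movedl h hkl.symm h2.symm

lemma movedk1 (h : 3 ≤ n) {k l : Fin n} (hkl : k ≠ l) : (sw k * sw l) (k+1) ≠ k + 1 := by
  intro he
  have h2 : (sw k * sw l)⁻¹ ((sw k * sw l) (k+1)) = (sw k * sw l)⁻¹ (k+1) := by rw [he]
  rw [show ∀ (f : Equiv.Perm (Fin n)) (x : Fin n), f⁻¹ (f x) = x from fun f x => f.symm_apply_apply x, mul_inv_rev, sw_inv, sw_inv] at h2
  exact movedl1 h hkl.symm h2.symm

end Helpers

section Key
variable {n : ℕ} [NeZero n]

lemma sw_apply_def (i x : Fin n) :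
    sw i x = if x = i then i + 1 else if x = i + 1 then i else x := by
  unfold sw; exact Equiv.swap_apply_def (a := i) (b := i + 1) (x := x)

lemma keyL (h4 : 4 ≤ n) {i j k l : Fin n} (hij : i ≠ j)
    (h : sw i * sw j = sw k * sw l) :
    (k = i ∧ l = j) ∨ (k = j ∧ l = i ∧ sw i * sw j = sw j * sw i) := by
  have h2 : 2 ≤ n := by omega
  have h3 : 3 ≤ n := by omega
  have hkl : k ≠ l := by
    intro he; rw [he, sw_mul_self] at h
    refine hij (sw_inj h3 ?_)
    have h' : sw i = (sw j)⁻¹ := eq_inv_of_mul_eq_one_left h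
    rwa [sw_inv] at h'
  have hLk : (sw i * sw j) k ≠ k := by rw [h]; exact movedk h3 hkl
  have hLk1 : (sw i * sw j) (k+1) ≠ k+1 := by rw [h]; exact movedk1 h3 hkl
  have hLl : (sw i * sw j) l ≠ l := by rw [h]; exact movedl h3 hkl
  have hLl1 : (sw i * sw j) (l+1) ≠ l+1 := by rw [h]; exact movedl1 h3 hkl
  by_cases hB : j = i + 1
  · subst hB
    -- moved set is {i, i+1, i+1+1}
    have hk' : k = i ∨ k = i + 1 := by
      rcases moved hLk with hk|hk|hk|hk
      · exact Or.inl hk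
      · exact Or.inr hk
      · exact Or.inr hk
      · exfalso
        rcases moved hLk1 with m|m|m|m <;> rw [hk] at m
        · exact fin_a3 h4 i m
        · exact fin_a2 h3 i (add_right_cancel m)
        · exact fin_a2 h3 i (add_right_cancel m)
        · exact fin_a1 h2 (i+1) (add_right_cancel m)
    have hl' : l = i ∨ l = i + 1 := by
      rcases moved hLl with hk|hk|hk|hk
      · exact Or.inl hk
      · exact Or.inr hk
      · exact Or.inr hk
      · exfalso
        rcases moved hLl1 with m|m|m|m <;> rw [hk] at m
        · exact fin_a3 h4 i m
        · exact fin_a2 h3 i (add_right_cancel m)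
        · exact fin_a2 h3 i (add_right_cancel m)
        · exact fin_a1 h2 (i+1) (add_right_cancel m)
    rcases hk' with hk|hk <;> rcases hl' with hl|hl
    · exact absurd (hk.trans hl.symm) hkl
    · exact Or.inl ⟨hk, hl⟩
    · -- k = i+1, l = i : evaluate h at i
      exfalso
      have hv := DFunLike.congr_fun h i
      rw [hk, hl] at hv
      rw [Equiv.Perm.mul_apply, Equiv.Perm.mul_apply,
        sw_apply_of_ne (i+1) (Ne.symm (fin_a1 h2 i)) (Ne.symm (fin_a2 h3 i))] at hv
      simp only [sw_apply_left] at hv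
      first | exact fin_a1 h2 (i+1) hv.symm | exact fin_a1 h2 (i+1) hv
    · exact absurd (hk.trans hl.symm) hkl
  by_cases hC : i = j + 1
  · subst hC
    have hk' : k = j ∨ k = j + 1 := by
      rcases moved hLk with hk|hk|hk|hk
      · exact Or.inr hk
      · exfalso
        rcases moved hLk1 with m|m|m|m <;> rw [hk] at m
        · exact fin_a2 h3 j (add_right_cancel m)
        · exact fin_a1 h2 (j+1) (add_right_cancel m)
        · exact fin_a3 h4 j m
        · exact fin_a2 h3 j (add_right_cancel m)
      · exact Or.inl hk
      · exact Or.inr hk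
    have hl' : l = j ∨ l = j + 1 := by
      rcases moved hLl with hk|hk|hk|hk
      · exact Or.inr hk
      · exfalso
        rcases moved hLl1 with m|m|m|m <;> rw [hk] at m
        · exact fin_a2 h3 j (add_right_cancel m)
        · exact fin_a1 h2 (j+1) (add_right_cancel m)
        · exact fin_a3 h4 j m
        · exact fin_a2 h3 j (add_right_cancel m)
      · exact Or.inl hk
      · exact Or.inr hk
    rcases hk' with hk|hk <;> rcases hl' with hl|hl
    · exact absurd (hk.trans hl.symm) hkl
    · -- k = j, l = j+1 : evaluate h at j
      exfalso
      have hv := DFunLike.congr_fun h j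
      rw [hk, hl] at hv
      rw [Equiv.Perm.mul_apply, Equiv.Perm.mul_apply,
        sw_apply_of_ne (j+1) (Ne.symm (fin_a1 h2 j)) (Ne.symm (fin_a2 h3 j))] at hv
      simp only [sw_apply_left] at hv
      first | exact fin_a1 h2 (j+1) hv.symm | exact fin_a1 h2 (j+1) hv
    · exact Or.inl ⟨hk, hl⟩
    · exact absurd (hk.trans hl.symm) hkl
  · -- disjoint case
    have hji : j ≠ i := Ne.symm hij
    have hdisj : (sw i).Disjoint (sw j) := by
      intro x
      by_cases hx1 : x = j
      · left; rw [hx1]; exact sw_apply_of_ne i hji hB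
      by_cases hx2 : x = j + 1
      · left; rw [hx2]
        exact sw_apply_of_ne i (Ne.symm hC) (fun q => hij (add_right_cancel q).symm)
      · right; exact sw_apply_of_ne j hx1 hx2
    have hcomm : sw i * sw j = sw j * sw i := hdisj.commute.eq
    have hinv : sw j * sw i = sw l * sw k := by
      have h' := congrArg Inv.inv h
      rwa [mul_inv_rev, mul_inv_rev, sw_inv, sw_inv, sw_inv, sw_inv] at h'
    rcases moved hLk with hk|hk|hk|hk
    · exact Or.inl ⟨hk, by
        rw [hk] at h
        exact (sw_inj h3 (mul_left_cancel h)).symm⟩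
    · -- k = i + 1 : contradiction
      exfalso
      have hv := DFunLike.congr_fun hinv (i+1)
      rw [hk] at hv
      rw [Equiv.Perm.mul_apply, Equiv.Perm.mul_apply, sw_apply_right,
        sw_apply_of_ne j hij hC, sw_apply_left] at hv
      -- hv : i = sw l (i+1+1)
      rw [sw_apply_def] at hv
      split_ifs at hv with m1 m2
      · rw [← m1] at hv; exact fin_a3 h4 i hv.symm
      · rw [← hv] at m2
        first | exact fin_a1 h2 (i+1) m2 | exact fin_a1 h2 (i+1) m2.symm
      · exact fin_a2 h3 i hv.symm
    · -- k = j
      refine Or.inr ⟨hk, ?_, hcomm⟩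
      rw [hk] at h
      have h' : sw j * sw i = sw j * sw l := hcomm.symm.trans h
      exact (sw_inj h3 (mul_left_cancel h')).symm
    · -- k = j + 1 : contradiction
      exfalso
      have hv := DFunLike.congr_fun hinv (j+1)
      rw [hk] at hv
      rw [Equiv.Perm.mul_apply,  Equiv.Perm.mul_apply,
        sw_apply_of_ne i (Ne.symm hC) (fun q => hij (add_right_cancel q).symm),
        sw_apply_right, sw_apply_left] at hv
      -- hv : j = sw l (j+1+1)
      rw [sw_apply_def] at hv
      split_ifs at hv with m1 m2
      · rw [← m1] at hv; exact fin_a3 h4 j hv.symm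
      · rw [← hv] at m2
        first | exact fin_a1 h2 (j+1) m2 | exact fin_a1 h2 (j+1) m2.symm
      · exact fin_a2 h3 j hv.symm

end Key

section Main2
variable {n : ℕ} [NeZero n]

lemma sw_def (i : Fin n) : sw i = Equiv.swap i (i + 1) := rfl

lemma succ_eq (h2 : 2 ≤ n) (i : Fin n) :
    (⟨(i.val + 1) % n, Nat.mod_lt _ i.pos⟩ : Fin n) = i + 1 := by
  apply Fin.ext
  rw [Fin.add_def, fin_v1 h2]

lemma MB_adj_iff (h2 : 2 ≤ n) {x y : Equiv.Perm (Fin n)} :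
    (MB n).Adj x y ↔ x ≠ y ∧ ∃ i : Fin n, y = x * sw i := by
  unfold MB
  rw [SimpleGraph.fromRel_adj]
  simp only [succ_eq h2, ← sw_def]
  constructor
  · rintro ⟨hne, hrel⟩
    refine ⟨hne, ?_⟩
    rcases hrel with ⟨i, hi⟩ | ⟨i, hi⟩
    · exact ⟨i, hi⟩
    · exact ⟨i, by rw [hi, mul_assoc, sw_mul_self, mul_one]⟩
  · rintro ⟨hne, i, hi⟩
    exact ⟨hne, Or.inl ⟨i, hi⟩⟩

lemma adj_sign (h2 : 2 ≤ n) {x y : Equiv.Perm (Fin n)} (ha : (MB n).Adj x y) :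
    Equiv.Perm.sign y = - Equiv.Perm.sign x := by
  obtain ⟨-, i, rfl⟩ := (MB_adj_iff h2).1 ha
  rw [map_mul, sw_def, Equiv.Perm.sign_swap (Ne.symm (fin_a1 h2 i)), mul_neg_one]

lemma no_triangle (h2 : 2 ≤ n) {x y w : Equiv.Perm (Fin n)} (hxy : (MB n).Adj x y)
    (hxw : (MB n).Adj x w) (hyw : (MB n).Adj y w) : False := by
  have e1 := adj_sign h2 hxy
  have e2 := adj_sign h2 hxw
  have e3 := adj_sign h2 hyw
  rw [e1, neg_neg] at e3
  rw [e3] at e2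
  have := congrArg Units.val e2
  rcases Int.units_eq_one_or (Equiv.Perm.sign x) with hq | hq <;>
    rw [hq] at this <;> simp at this

lemma nbr_eq (h2 : 2 ≤ n) (v : Equiv.Perm (Fin n)) :
    {w | (MB n).Adj v w} = Set.range (fun i : Fin n => v * sw i) := by
  ext w
  simp only [Set.mem_setOf_eq, MB_adj_iff h2, Set.mem_range]
  constructor
  · rintro ⟨-, i, rfl⟩; exact ⟨i, rfl⟩
  · rintro ⟨i, rfl⟩
    refine ⟨?_, i, rfl⟩
    intro he
    have h1 : v * 1 = v * sw i := by rw [mul_one]; exact he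
    exact sw_ne_one h2 i (mul_left_cancel h1).symm

lemma nbr_ncard (h3 : 3 ≤ n) (v : Equiv.Perm (Fin n)) :
    {w | (MB n).Adj v w}.ncard = n := by
  have hinj : Function.Injective (fun i : Fin n => v * sw i) := by
    intro i j he
    exact sw_inj h3 (mul_left_cancel he)
  rw [nbr_eq (by omega) v, ← Set.image_univ, Set.ncard_image_of_injective _ hinj,
    Set.ncard_univ, Nat.card_eq_fintype_card, Fintype.card_fin]

end Main2

theorem stmt_8 {n : ℕ} (hn : 4 ≤ n) (S : Set (Equiv.Perm (Fin n)))
    (hS : S.ncard = 4)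
    (hcyc : ∃ a b c d : Equiv.Perm (Fin n), [a, b, c, d].Pairwise (· ≠ ·) ∧
      S = {a, b, c, d} ∧ (MB n).Adj a b ∧ (MB n).Adj b c ∧ (MB n).Adj c d ∧
      (MB n).Adj d a ∧ ¬ (MB n).Adj a c ∧ ¬ (MB n).Adj b d) :
    (setNbhd (MB n) S).ncard = 4 * (n - 2) := by
  haveI : NeZero n := ⟨by omega⟩
  have h2 : 2 ≤ n := by omega
  have h3 : 3 ≤ n := by omega
  obtain ⟨a, b, c, d, hpw, hSeq, hab, hbc, hcd, hda, hac, hbd⟩ := hcyc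
  simp only [List.pairwise_cons, List.mem_cons, List.not_mem_nil, or_false,
    List.Pairwise.nil, and_true, List.mem_singleton, List.mem_nil_iff] at hpw
  have hab' : a ≠ b := hpw.1 b (Or.inl rfl)
  have hac' : a ≠ c := hpw.1 c (Or.inr (Or.inl rfl))
  have had' : a ≠ d := hpw.1 d (Or.inr (Or.inr rfl))
  have hbc' : b ≠ c := hpw.2.1 c (Or.inl rfl)
  have hbd' : b ≠ d := hpw.2.1 d (Or.inr rfl)
  have hcd' : c ≠ d := hpw.2.2.1 d rfl
  obtain ⟨-, i, hbi⟩ := (MB_adj_iff h2).1 hab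
  obtain ⟨-, j, hcj⟩ := (MB_adj_iff h2).1 hbc
  obtain ⟨-, m, hdm⟩ := (MB_adj_iff h2).1 hda.symm
  obtain ⟨-, p, hdp⟩ := (MB_adj_iff h2).1 hcd
  have hcij : c = a * (sw i * sw j) := by rw [hcj, hbi, mul_assoc]
  have hij : i ≠ j := by
    intro he
    apply hac'
    rw [hcij, he, sw_mul_self, mul_one]
  have hE0 : a * sw m = a * (sw i * sw j * sw p) := by
    rw [← mul_assoc, ← hcij, ← hdp, hdm]
  have hE0' : sw m = sw i * sw j * sw p := mul_left_cancel hE0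
  have hE1 : sw i * sw j = sw m * sw p := by
    rw [hE0', mul_assoc, sw_mul_self, mul_one]
  have hdj : d = a * sw j := by
    rcases keyL hn hij hE1 with ⟨hm, _hp⟩ | ⟨hm, _hp, _hcm⟩
    · exfalso; apply hbd'; rw [hbi, hdm, hm]
    · rw [hdm, hm]
  have keyAC : ∀ w, (MB n).Adj a w → (MB n).Adj c w → w = b ∨ w = d := by
    intro w h1' h2'
    obtain ⟨-, k, hk⟩ := (MB_adj_iff h2).1 h1'
    obtain ⟨-, l, hl⟩ := (MB_adj_iff h2).1 h2'
    have hc2 : c = w * sw l := by rw [hl, mul_assoc, sw_mul_self, mul_one]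
    have hcw : c = a * (sw k * sw l) := by rw [hc2, hk, mul_assoc]
    have hE2 : sw i * sw j = sw k * sw l := mul_left_cancel (hcij.symm.trans hcw)
    rcases keyL hn hij hE2 with ⟨hk', _⟩ | ⟨hk', _, -⟩
    · left; rw [hk, hk', ← hbi]
    · right; rw [hk, hk', ← hdj]
  have hadi : a = b * sw i := by rw [hbi, mul_assoc, sw_mul_self, mul_one]
  have hdij : d = b * (sw i * sw j) := by rw [hdj, hadi, mul_assoc]
  have keyBD : ∀ w, (MB n).Adj b w → (MB n).Adj d w → w = a ∨ w = c := by
    intro w h1' h2'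
    obtain ⟨-, k, hk⟩ := (MB_adj_iff h2).1 h1'
    obtain ⟨-, l, hl⟩ := (MB_adj_iff h2).1 h2'
    have hd2 : d = w * sw l := by rw [hl, mul_assoc, sw_mul_self, mul_one]
    have hdw : d = b * (sw k * sw l) := by rw [hd2, hk, mul_assoc]
    have hE2 : sw i * sw j = sw k * sw l := mul_left_cancel (hdij.symm.trans hdw)
    rcases keyL hn hij hE2 with ⟨hk', _⟩ | ⟨hk', _, -⟩
    · left; rw [hk, hk', ← hadi]
    · right; rw [hk, hk', ← hcj]
  -- the four neighbor pieces
  set Na := {w | (MB n).Adj a w} \ S with hNa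
  set Nb := {w | (MB n).Adj b w} \ S with hNb
  set Nc := {w | (MB n).Adj c w} \ S with hNc
  set Nd := {w | (MB n).Adj d w} \ S with hNd
  have hN : setNbhd (MB n) S = Na ∪ Nb ∪ Nc ∪ Nd := by
    ext w
    simp only [setNbhd, Set.mem_setOf_eq, hNa, hNb, hNc, hNd, Set.mem_union,
      Set.mem_diff, Set.mem_setOf_eq]
    constructor
    · rintro ⟨hw, v, hv, hadj⟩
      rw [hSeq] at hv
      simp only [Set.mem_insert_iff, Set.mem_singleton_iff] at hv
      rcases hv with rfl|rfl|rfl|rfl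
      · exact Or.inl (Or.inl (Or.inl ⟨hadj, hw⟩))
      · exact Or.inl (Or.inl (Or.inr ⟨hadj, hw⟩))
      · exact Or.inl (Or.inr ⟨hadj, hw⟩)
      · exact Or.inr ⟨hadj, hw⟩
    · rintro ((((⟨hadj, hw⟩|⟨hadj, hw⟩)|⟨hadj, hw⟩)|⟨hadj, hw⟩))
      · exact ⟨hw, a, by rw [hSeq]; simp, hadj⟩
      · exact ⟨hw, b, by rw [hSeq]; simp, hadj⟩
      · exact ⟨hw, c, by rw [hSeq]; simp, hadj⟩
      · exact ⟨hw, d, by rw [hSeq]; simp, hadj⟩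
  have dab : Disjoint Na Nb := by
    rw [Set.disjoint_left]
    rintro w ⟨hwa, _⟩ ⟨hwb, _⟩
    exact no_triangle h2 hab hwa hwb
  have dad : Disjoint Na Nd := by
    rw [Set.disjoint_left]
    rintro w ⟨hwa, _⟩ ⟨hwd, _⟩
    exact no_triangle h2 hda.symm hwa hwd
  have dbc : Disjoint Nb Nc := by
    rw [Set.disjoint_left]
    rintro w ⟨hwb, _⟩ ⟨hwc, _⟩
    exact no_triangle h2 hbc hwb hwc
  have dcd : Disjoint Nc Nd := by
    rw [Set.disjoint_left]
    rintro w ⟨hwc, _⟩ ⟨hwd, _⟩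
    exact no_triangle h2 hcd hwc hwd
  have dac : Disjoint Na Nc := by
    rw [Set.disjoint_left]
    rintro w ⟨hwa, hws⟩ ⟨hwc, _⟩
    rcases keyAC w hwa hwc with rfl|rfl
    · exact hws (by rw [hSeq]; simp)
    · exact hws (by rw [hSeq]; simp)
  have dbd : Disjoint Nb Nd := by
    rw [Set.disjoint_left]
    rintro w ⟨hwb, hws⟩ ⟨hwd, _⟩
    rcases keyBD w hwb hwd with rfl|rfl
    · exact hws (by rw [hSeq]; simp)
    · exact hws (by rw [hSeq]; simp)
  -- cardinalities of the pieces
  have card_piece : ∀ (x u v : Equiv.Perm (Fin n)), u ≠ v →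
      {w | (MB n).Adj x w} ∩ S = {u, v} →
      ({w | (MB n).Adj x w} \ S).ncard = n - 2 := by
    intro x u v huv hi
    have hdd : {w | (MB n).Adj x w} \ S
        = {w | (MB n).Adj x w} \ ({w | (MB n).Adj x w} ∩ S) := by
      rw [Set.diff_self_inter]
    rw [hdd, Set.ncard_diff Set.inter_subset_left (Set.toFinite _), hi,
      Set.ncard_pair huv, nbr_ncard h3 x]
  have cNa : Na.ncard = n - 2 := by
    refine card_piece a b d hbd' ?_
    ext w
    simp only [Set.mem_inter_iff, Set.mem_setOf_eq, hSeq, Set.mem_insert_iff,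
      Set.mem_singleton_iff]
    constructor
    · rintro ⟨hadj, rfl|rfl|rfl|rfl⟩
      · exact absurd hadj ((MB n).irrefl)
      · exact Or.inl rfl
      · exact absurd hadj hac
      · exact Or.inr rfl
    · rintro (rfl|rfl)
      · exact ⟨hab, Or.inr (Or.inl rfl)⟩
      · exact ⟨hda.symm, Or.inr (Or.inr (Or.inr rfl))⟩
  have cNb : Nb.ncard = n - 2 := by
    refine card_piece b a c hac' ?_
    ext w
    simp only [Set.mem_inter_iff, Set.mem_setOf_eq, hSeq, Set.mem_insert_iff,
      Set.mem_singleton_iff]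
    constructor
    · rintro ⟨hadj, rfl|rfl|rfl|rfl⟩
      · exact Or.inl rfl
      · exact absurd hadj ((MB n).irrefl)
      · exact Or.inr rfl
      · exact absurd hadj hbd
    · rintro (rfl|rfl)
      · exact ⟨hab.symm, Or.inl rfl⟩
      · exact ⟨hbc, Or.inr (Or.inr (Or.inl rfl))⟩
  have cNc : Nc.ncard = n - 2 := by
    refine card_piece c b d hbd' ?_
    ext w
    simp only [Set.mem_inter_iff, Set.mem_setOf_eq, hSeq, Set.mem_insert_iff,
      Set.mem_singleton_iff]
    constructor
    · rintro ⟨hadj, rfl|rfl|rfl|rfl⟩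
      · exact absurd hadj (fun q => hac q.symm)
      · exact Or.inl rfl
      · exact absurd hadj ((MB n).irrefl)
      · exact Or.inr rfl
    · rintro (rfl|rfl)
      · exact ⟨hbc.symm, Or.inr (Or.inl rfl)⟩
      · exact ⟨hcd, Or.inr (Or.inr (Or.inr rfl))⟩
  have cNd : Nd.ncard = n - 2 := by
    refine card_piece d a c hac' ?_
    ext w
    simp only [Set.mem_inter_iff, Set.mem_setOf_eq, hSeq, Set.mem_insert_iff,
      Set.mem_singleton_iff]
    constructor
    · rintro ⟨hadj, rfl|rfl|rfl|rfl⟩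
      · exact Or.inl rfl
      · exact absurd hadj (fun q => hbd q.symm)
      · exact Or.inr rfl
      · exact absurd hadj ((MB n).irrefl)
    · rintro (rfl|rfl)
      · exact ⟨hda, Or.inl rfl⟩
      · exact ⟨hcd.symm, Or.inr (Or.inr (Or.inl rfl))⟩
  have D1 : Disjoint (Na ∪ Nb ∪ Nc) Nd := by
    rw [Set.disjoint_union_left, Set.disjoint_union_left]
    exact ⟨⟨dad, dbd⟩, dcd⟩
  have D2 : Disjoint (Na ∪ Nb) Nc := by
    rw [Set.disjoint_union_left]
    exact ⟨dac, dbc⟩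
  rw [hN, Set.ncard_union_eq D1 (Set.toFinite _) (Set.toFinite _),
    Set.ncard_union_eq D2 (Set.toFinite _) (Set.toFinite _),
    Set.ncard_union_eq dab (Set.toFinite _) (Set.toFinite _),
    cNa, cNb, cNc, cNd]
  omega
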